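/- Let n ≥ p ≥ 2 and m ≥ 3, and let A = 2·I_{m−2}⊗D + M⊗L be the (m−2)np × (m−2)np matrix built from D = diag(I_a, 2·I_{np−a}), L = diag(−I_a, −2·I_c, O_d) with a = p(p−1)/2, c = (n−p)p, d = p(p+1)/2, and M the (m−2)×(m−2) matrix with M[i,j] = 1 if |i−j| = 1 and 0 otherwise. Let 0 < δ ≤ 1 and let E be a symmetric real (m−2)np × (m−2)np matrix, partitioned into np×np blocks E_{ij} (1 ≤ i,j ≤ m−2), which is block tridiagonal (E_{ij} = O for |i−j| ≥ 2) and satisfies ‖E_{ii}‖₂ ≤ 28δ + 20δ² for all i and ‖E_{i,i+1}‖₂ ≤ (15/2)δ + (31/2)δ² + 14δ³ + 4δ⁴ for all i. Then every eigenvalue of A + E is at least 2 − 2·cos(π/(m−1)) − 43δ − 90δ²; that is, vᵀ(A+E)v ≥ (2 − 2·cos(π/(m−1)) − 43δ − 90δ²)·‖v‖² for all v ∈ ℝ^{(m−2)np}. -/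

import Mathlib

open Matrix Real
open scoped Kronecker

noncomputable def specNorm {m n : Type*} [Fintype m] [Fintype n] [DecidableEq n]
    (A : Matrix m n ℝ) : ℝ :=
  ‖LinearMap.toContinuousLinearMap (Matrix.toEuclideanLin A)‖

/-- The `N×N` tridiagonal Toeplitz matrix with zero diagonal and ones on the sub- and
super-diagonals. -/
def triToeplitz (N : ℕ) : Matrix (Fin N) (Fin N) ℝ :=
  fun i j => if (i : ℕ) = (j : ℕ) + 1 ∨ (j : ℕ) = (i : ℕ) + 1 then 1 else 0

/-- `D = diag(I_a, 2I_{np−a})` with `a = p(p−1)/2`. -/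
def Dmat (n p : ℕ) : Matrix (Fin (n * p)) (Fin (n * p)) ℝ :=
  Matrix.diagonal (fun i => if (i : ℕ) < p * (p - 1) / 2 then (1 : ℝ) else 2)

/-- `L = diag(−I_a, −2I_c, O_d)` with `a = p(p−1)/2`, `c = (n−p)p`, `d = p(p+1)/2`. -/
def Lmat (n p : ℕ) : Matrix (Fin (n * p)) (Fin (n * p)) ℝ :=
  Matrix.diagonal (fun i =>
    if (i : ℕ) < p * (p - 1) / 2 then (-1 : ℝ)
    else if (i : ℕ) < p * (p - 1) / 2 + (n - p) * p then -2 else 0)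

lemma bilin_bound {K : Type*} [Fintype K] [DecidableEq K] (B : Matrix K K ℝ) (x y : K → ℝ) :
    |∑ s, ∑ t, x s * B s t * y t|
      ≤ specNorm B * Real.sqrt (∑ s, x s ^ 2) * Real.sqrt (∑ t, y t ^ 2) := by
  set X : EuclideanSpace ℝ K := (WithLp.equiv 2 (K → ℝ)).symm x with hXdef
  set Y : EuclideanSpace ℝ K := (WithLp.equiv 2 (K → ℝ)).symm y with hYdef
  have hXx : ∀ s, X s = x s := fun s => rfl
  have hYy : ∀ s, Y s = y s := fun s => rfl
  have h1 : ∑ s, ∑ t, x s * B s t * y t = inner ℝ X (Matrix.toEuclideanLin B Y) := by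
    rw [Matrix.toEuclideanLin_apply]
    simp only [inner, Matrix.mulVec, dotProduct]
    simp [Matrix.mulVec, dotProduct, Finset.mul_sum, mul_assoc]
    simp only [hXx]
    simp only [hYy, Finset.sum_mul]
    apply Finset.sum_congr rfl; intro i _; apply Finset.sum_congr rfl; intro j _; ring
  rw [h1]
  have h2 : |inner ℝ X (Matrix.toEuclideanLin B Y)| ≤ ‖X‖ * ‖Matrix.toEuclideanLin B Y‖ :=
    abs_real_inner_le_norm X _
  have h3 : ‖Matrix.toEuclideanLin B Y‖ ≤ specNorm B * ‖Y‖ := by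
    exact (LinearMap.toContinuousLinearMap (Matrix.toEuclideanLin B)).le_opNorm Y
  have hX : ‖X‖ = Real.sqrt (∑ s, x s ^ 2) := by
    rw [EuclideanSpace.norm_eq]
    congr 1; apply Finset.sum_congr rfl; intro i _; rw [hXx, Real.norm_eq_abs, sq_abs]
  have hY : ‖Y‖ = Real.sqrt (∑ t, y t ^ 2) := by
    rw [EuclideanSpace.norm_eq]
    congr 1; apply Finset.sum_congr rfl; intro i _; rw [hYy, Real.norm_eq_abs, sq_abs]
  calc |inner ℝ X (Matrix.toEuclideanLin B Y)| ≤ ‖X‖ * ‖Matrix.toEuclideanLin B Y‖ := h2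
    _ ≤ ‖X‖ * (specNorm B * ‖Y‖) := by
        apply mul_le_mul_of_nonneg_left h3 (norm_nonneg _)
    _ = specNorm B * ‖X‖ * ‖Y‖ := by ring
    _ = _ := by rw [hX, hY]

lemma sum_fin_ite {N : ℕ} (k : ℕ) (f : Fin N → ℝ) :
    ∑ j : Fin N, (if (j : ℕ) = k then f j else 0) = if h : k < N then f ⟨k, h⟩ else 0 := by
  split
  · next h =>
    rw [show (fun j : Fin N => if (j : ℕ) = k then f j else 0)
        = fun j : Fin N => if j = ⟨k, h⟩ then f j else 0 by
      funext j; congr 1; simp [Fin.ext_iff]]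
    simp
  · next h =>
    apply Finset.sum_eq_zero
    intro j _
    rw [if_neg]
    omega

lemma toeplitz_eigen {N : ℕ} (U : ℕ → ℝ) (h0 : U 0 = 0) (hN : U (N + 1) = 0) (i : Fin N) :
    ∑ j : Fin N, triToeplitz N i j * U ((j : ℕ) + 1) = U (i : ℕ) + U ((i : ℕ) + 2) := by
  have hsplit : ∀ j : Fin N, triToeplitz N i j * U ((j : ℕ) + 1)
      = (if (j : ℕ) + 1 = (i : ℕ) then U ((j : ℕ) + 1) else 0)
        + (if (j : ℕ) = (i : ℕ) + 1 then U ((j : ℕ) + 1) else 0) := by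
    intro j
    unfold triToeplitz
    by_cases h1 : (i : ℕ) = (j : ℕ) + 1
    · have h2 : ¬((j : ℕ) = (i : ℕ) + 1) := by omega
      rw [if_pos (Or.inl h1), if_pos h1.symm, if_neg h2]; ring
    · by_cases h2 : (j : ℕ) = (i : ℕ) + 1
      · rw [if_pos (Or.inr h2), if_neg (by omega), if_pos h2]; ring
      · rw [if_neg (by tauto), if_neg (by omega), if_neg h2]; ring
  simp only [hsplit, Finset.sum_add_distrib]
  congr 1
  · rcases Nat.eq_zero_or_pos (i : ℕ) with h | h
    · rw [h, h0]
      apply Finset.sum_eq_zero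
      intro j _; rw [if_neg]; omega
    · obtain ⟨k, hk⟩ : ∃ k, (i : ℕ) = k + 1 := ⟨(i : ℕ) - 1, by omega⟩
      have hkN : k < N := by have := i.isLt; omega
      have : ∀ j : Fin N, (if (j : ℕ) + 1 = (i : ℕ) then U ((j : ℕ) + 1) else 0)
          = (if (j : ℕ) = k then U ((j : ℕ) + 1) else 0) := by
        intro j; congr 1; simp [hk]
      simp only [this]
      rw [sum_fin_ite k (fun j => U ((j : ℕ) + 1)), dif_pos hkN]
      simp [hk]
  · rw [sum_fin_ite ((i : ℕ) + 1) (fun j => U ((j : ℕ) + 1))]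
    split
    · rfl
    · next h =>
      have : (i : ℕ) + 1 = N := by have := i.isLt; omega
      rw [← hN]
      congr 1
      omega

lemma amgm (a b x y : ℝ) (ha : 0 < a) (hb : 0 < b) :
    x * y ≤ (b / a * x ^ 2) / 2 + (a / b * y ^ 2) / 2 := by
  rw [← sub_nonneg]
  have key : (b / a * x ^ 2) / 2 + (a / b * y ^ 2) / 2 - x * y
      = (b * x - a * y) ^ 2 / (2 * a * b) := by
    field_simp
    ring
  rw [key]
  positivity

lemma toeplitz_symm (N : ℕ) (i j : Fin N) : triToeplitz N i j = triToeplitz N j i := by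
  simp [triToeplitz, or_comm]

lemma toeplitz_quad {N : ℕ} (w : Fin N → ℝ) :
    ∑ i, ∑ j, triToeplitz N i j * (w i * w j)
      ≤ 2 * Real.cos (π / (N + 1)) * ∑ i, w i ^ 2 := by
  set θ := π / ((N : ℝ) + 1) with hθ
  have hθpos : 0 < θ := div_pos Real.pi_pos (by positivity)
  set u : Fin N → ℝ := fun i => Real.sin (((i : ℕ) + 1) * θ) with hu
  have hupos : ∀ i, 0 < u i := by
    intro i
    apply Real.sin_pos_of_pos_of_lt_pi
    · positivity
    · have hle : ((i : ℕ) : ℝ) + 1 ≤ (N : ℝ) := by exact_mod_cast i.isLt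
      have h1 : ((i : ℕ) : ℝ) + 1 < (N : ℝ) + 1 := by linarith
      calc (((i : ℕ) : ℝ) + 1) * θ < ((N : ℝ) + 1) * θ :=
            mul_lt_mul_of_pos_right h1 hθpos
        _ = π := by rw [hθ]; field_simp
  have heig : ∀ i : Fin N, ∑ j, triToeplitz N i j * u j = 2 * Real.cos θ * u i := by
    intro i
    have h0 : Real.sin ((0 : ℕ) * θ) = 0 := by simp
    have hNs : Real.sin (((N + 1 : ℕ) : ℝ) * θ) = 0 := by
      have : ((N + 1 : ℕ) : ℝ) * θ = π := by
        rw [hθ]; push_cast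
        field_simp
      rw [this, Real.sin_pi]
    have he := toeplitz_eigen (fun k => Real.sin ((k : ℝ) * θ)) h0 hNs i
    have hcast : ∀ j : Fin N, Real.sin (((((j : ℕ) + 1) : ℕ) : ℝ) * θ) = u j := by
      intro j; rw [hu]; push_cast; ring_nf
    simp only [hcast] at he
    rw [he, hu]
    have key : ∀ x : ℝ, Real.sin (x - θ) + Real.sin (x + θ) = 2 * Real.cos θ * Real.sin x := by
      intro x; rw [Real.sin_sub, Real.sin_add]; ring
    have := key ((((i : ℕ) : ℝ) + 1) * θ)
    rw [show (((i : ℕ) : ℝ) + 1) * θ - θ = ((i : ℕ) : ℝ) * θ by ring,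
        show (((i : ℕ) : ℝ) + 1) * θ + θ = (((i : ℕ) + 2 : ℕ) : ℝ) * θ by push_cast; ring] at this
    rw [← this]
  have step1 : ∑ i, ∑ j, triToeplitz N i j * (w i * w j)
      ≤ ∑ i, ∑ j, (triToeplitz N i j * (u j / u i * w i ^ 2) / 2
          + triToeplitz N i j * (u i / u j * w j ^ 2) / 2) := by
    apply Finset.sum_le_sum; intro i _
    apply Finset.sum_le_sum; intro j _
    unfold triToeplitz
    split
    · simpa using amgm (u i) (u j) (w i) (w j) (hupos i) (hupos j)
    · simp
  have part1 : ∑ i, ∑ j, triToeplitz N i j * (u j / u i * w i ^ 2) / 2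
      = ∑ i, Real.cos θ * w i ^ 2 := by
    apply Finset.sum_congr rfl; intro i _
    have : ∀ j, triToeplitz N i j * (u j / u i * w i ^ 2) / 2
        = (w i ^ 2 / (2 * u i)) * (triToeplitz N i j * u j) := by
      intro j
      field_simp
    simp only [this, ← Finset.mul_sum, heig i]
    rw [div_mul_eq_mul_div, div_eq_iff (ne_of_gt (by have := hupos i; positivity : (0:ℝ) < 2 * u i))]
    ring
  have part2 : ∑ i, ∑ j, triToeplitz N i j * (u i / u j * w j ^ 2) / 2
      = ∑ j, Real.cos θ * w j ^ 2 := by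
    rw [Finset.sum_comm]
    apply Finset.sum_congr rfl; intro j _
    have : ∀ i, triToeplitz N i j * (u i / u j * w j ^ 2) / 2
        = (w j ^ 2 / (2 * u j)) * (triToeplitz N j i * u i) := by
      intro i
      rw [toeplitz_symm N i j]
      field_simp
    simp only [this, ← Finset.mul_sum, heig j]
    rw [div_mul_eq_mul_div, div_eq_iff (ne_of_gt (by have := hupos j; positivity : (0:ℝ) < 2 * u j))]
    ring
  calc ∑ i, ∑ j, triToeplitz N i j * (w i * w j)
      ≤ ∑ i, ∑ j, (triToeplitz N i j * (u j / u i * w i ^ 2) / 2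
          + triToeplitz N i j * (u i / u j * w j ^ 2) / 2) := step1
    _ = ∑ i, Real.cos θ * w i ^ 2 + ∑ j, Real.cos θ * w j ^ 2 := by
        simp only [Finset.sum_add_distrib]
        rw [part1, part2]
    _ = 2 * Real.cos θ * ∑ i, w i ^ 2 := by
        rw [← Finset.sum_add_distrib]
        rw [Finset.mul_sum]
        apply Finset.sum_congr rfl; intro i _; ring

lemma quad_kron {N K : ℕ} (X : Matrix (Fin N) (Fin N) ℝ) (d : Fin K → ℝ)
    (v : Fin N × Fin K → ℝ) :
    v ⬝ᵥ ((X ⊗ₖ Matrix.diagonal d).mulVec v)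
      = ∑ s, d s * ∑ i, ∑ j, X i j * (v (i, s) * v (j, s)) := by
  simp only [dotProduct, mulVec, Fintype.sum_prod_type, Matrix.kroneckerMap_apply,
    Matrix.diagonal_apply, mul_ite, mul_zero, ite_mul, zero_mul, Finset.sum_ite_eq,
    Finset.sum_ite_eq', Finset.mem_univ, if_true]
  rw [Finset.sum_comm]
  apply Finset.sum_congr rfl; intro s _
  rw [Finset.mul_sum]
  apply Finset.sum_congr rfl; intro i _
  rw [Finset.mul_sum, Finset.mul_sum]
  apply Finset.sum_congr rfl; intro j _
  ring

lemma quad_expand {N K : ℕ} (M : Matrix (Fin N × Fin K) (Fin N × Fin K) ℝ)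
    (v : Fin N × Fin K → ℝ) :
    v ⬝ᵥ M.mulVec v = ∑ i, ∑ j, ∑ s, ∑ t, v (i, s) * M (i, s) (j, t) * v (j, t) := by
  simp only [dotProduct, mulVec, Fintype.sum_prod_type, Finset.mul_sum]
  apply Finset.sum_congr rfl; intro i _
  rw [Finset.sum_comm]
  apply Finset.sum_congr rfl; intro j _
  apply Finset.sum_congr rfl; intro s _
  apply Finset.sum_congr rfl; intro t _
  ring

set_option maxHeartbeats 1000000 in
/-- Eigenvalue lower bound for the perturbed Hessian `A + E` of the extended leapfrog
objective: every eigenvalue of `A + E` is at least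
`2 − 2cos(π/(m−1)) − 43δ − 90δ²`. -/
theorem stmt15 (n p m : ℕ) (hp : 2 ≤ p) (hnp : p ≤ n) (hm : 3 ≤ m)
    (δ : ℝ) (hδ0 : 0 < δ) (hδ1 : δ ≤ 1)
    (E : Matrix (Fin (m - 2) × Fin (n * p)) (Fin (m - 2) × Fin (n * p)) ℝ)
    (hsym : E.IsSymm)
    (htri : ∀ i j : Fin (m - 2), ((i : ℕ) + 2 ≤ (j : ℕ) ∨ (j : ℕ) + 2 ≤ (i : ℕ)) →
      (Matrix.of fun s t : Fin (n * p) => E (i, s) (j, t)) = 0)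
    (hdiag : ∀ i : Fin (m - 2),
      specNorm (Matrix.of fun s t : Fin (n * p) => E (i, s) (i, t))
        ≤ 28 * δ + 20 * δ ^ 2)
    (hoff : ∀ i j : Fin (m - 2), (j : ℕ) = (i : ℕ) + 1 →
      specNorm (Matrix.of fun s t : Fin (n * p) => E (i, s) (j, t))
        ≤ (15 / 2) * δ + (31 / 2) * δ ^ 2 + 14 * δ ^ 3 + 4 * δ ^ 4) :
    ∀ v : Fin (m - 2) × Fin (n * p) → ℝ,
      (2 - 2 * Real.cos (Real.pi / (m - 1)) - 43 * δ - 90 * δ ^ 2) * (v ⬝ᵥ v) ≤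
        v ⬝ᵥ (((2 : ℝ) • ((1 : Matrix (Fin (m - 2)) (Fin (m - 2)) ℝ) ⊗ₖ Dmat n p)
              + triToeplitz (m - 2) ⊗ₖ Lmat n p) + E).mulVec v := by
  intro v
  set a := p * (p - 1) / 2 with hadef
  set b := p * (p - 1) / 2 + (n - p) * p with hbdef
  set c := Real.cos (π / (((m - 2 : ℕ) : ℝ) + 1)) with hcdef
  set dfun : Fin (n * p) → ℝ := fun s => if (s : ℕ) < a then 1 else 2 with hdfun
  set lfun : Fin (n * p) → ℝ := fun s =>
    if (s : ℕ) < a then (-1 : ℝ) else if (s : ℕ) < b then -2 else 0 with hlfun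
  have hDm : Dmat n p = Matrix.diagonal dfun := rfl
  have hLm : Lmat n p = Matrix.diagonal lfun := rfl
  have hcastN : (((m - 2 : ℕ) : ℝ) + 1) = (m : ℝ) - 1 := by
    have h2m : (2 : ℕ) ≤ m := by omega
    rw [Nat.cast_sub h2m]
    push_cast
    ring
  have hgoalcos : Real.cos (π / ((m : ℝ) - 1)) = c := by rw [hcdef, hcastN]
  have hc1 : c ≤ 1 := Real.cos_le_one _
  have hc2 : -1 ≤ c := Real.neg_one_le_cos _
  -- A part
  set W : Fin (n * p) → ℝ := fun s => ∑ i, v (i, s) ^ 2 with hWdef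
  set Ts : Fin (n * p) → ℝ := fun s => ∑ i, ∑ j, triToeplitz (m - 2) i j * (v (i, s) * v (j, s)) with hTsdef
  have hTs : ∀ s, Ts s ≤ 2 * c * W s := fun s => toeplitz_quad (fun i => v (i, s))
  have hW0 : ∀ s, 0 ≤ W s := fun s => Finset.sum_nonneg (fun i _ => sq_nonneg _)
  have hQ1 : v ⬝ᵥ (((1 : Matrix (Fin (m - 2)) (Fin (m - 2)) ℝ) ⊗ₖ Dmat n p).mulVec v)
      = ∑ s, dfun s * W s := by
    rw [hDm, quad_kron]
    apply Finset.sum_congr rfl; intro s _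
    congr 1
    apply Finset.sum_congr rfl; intro i _
    simp [Matrix.one_apply, ite_mul, zero_mul, Finset.sum_ite_eq, sq]
  have hQ2 : v ⬝ᵥ ((triToeplitz (m - 2) ⊗ₖ Lmat n p).mulVec v) = ∑ s, lfun s * Ts s := by
    rw [hLm, quad_kron]
  have hQA : (2 - 2 * c) * (∑ s, W s) ≤ 2 * ∑ s, dfun s * W s + ∑ s, lfun s * Ts s := by
    rw [Finset.mul_sum, Finset.mul_sum, ← Finset.sum_add_distrib]
    apply Finset.sum_le_sum
    intro s _
    have h1 := hTs s
    have h2 := hW0 s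
    by_cases hsa : (s : ℕ) < a
    · simp only [hdfun, hlfun, if_pos hsa]
      nlinarith
    · by_cases hsb : (s : ℕ) < b
      · simp only [hdfun, hlfun, if_neg hsa, if_pos hsb]
        nlinarith [mul_nonneg (by linarith : (0:ℝ) ≤ 1 - c) h2]
      · simp only [hdfun, hlfun, if_neg hsa, if_neg hsb]
        nlinarith [mul_nonneg (by linarith : (0:ℝ) ≤ 1 + c) h2]
  -- E part
  set S : Fin (m - 2) → ℝ := fun i => ∑ s, v (i, s) ^ 2 with hSdef
  set r : Fin (m - 2) → ℝ := fun i => Real.sqrt (S i) with hrdef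
  have hS0 : ∀ i, 0 ≤ S i := fun i => Finset.sum_nonneg (fun s _ => sq_nonneg _)
  have hr2 : ∀ i, r i * r i = S i := fun i => Real.mul_self_sqrt (hS0 i)
  have hrsq : ∀ i, r i ^ 2 = S i := fun i => Real.sq_sqrt (hS0 i)
  have hr0 : ∀ i, 0 ≤ r i := fun i => Real.sqrt_nonneg _
  set α := 28 * δ + 20 * δ ^ 2 with hαdef
  set β := (15 / 2) * δ + (31 / 2) * δ ^ 2 + 14 * δ ^ 3 + 4 * δ ^ 4 with hβdef
  have hδ0' : (0:ℝ) ≤ δ := hδ0.le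
  have hα0 : 0 ≤ α := by rw [hαdef]; positivity
  have hβ0 : 0 ≤ β := by rw [hβdef]; positivity
  set B : Fin (m - 2) → Fin (m - 2) → ℝ :=
    fun i j => ∑ s, ∑ t, v (i, s) * E (i, s) (j, t) * v (j, t) with hBdef
  have hQE : v ⬝ᵥ E.mulVec v = ∑ i, ∑ j, B i j := quad_expand E v
  have hBbound : ∀ i j, |B i j|
      ≤ specNorm (Matrix.of fun s t : Fin (n * p) => E (i, s) (j, t)) * r i * r j := by
    intro i j
    exact bilin_bound (Matrix.of fun s t : Fin (n * p) => E (i, s) (j, t))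
      (fun s => v (i, s)) (fun t => v (j, t))
  have hBsym : ∀ i j, B i j = B j i := by
    intro i j
    rw [hBdef]
    simp only
    rw [Finset.sum_comm]
    apply Finset.sum_congr rfl; intro t _
    apply Finset.sum_congr rfl; intro s _
    rw [hsym.apply (i, s) (j, t)]
    ring
  have hrr0 : ∀ i j, 0 ≤ r i * r j := fun i j => mul_nonneg (hr0 i) (hr0 j)
  have key : ∀ i j, -((if i = j then α else 0) * (r i * r j)
      + β * (triToeplitz (m - 2) i j * (r i * r j))) ≤ B i j := by
    intro i j
    rcases eq_or_ne i j with rfl | hne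
    · have hT : triToeplitz (m - 2) i i = 0 := by
        unfold triToeplitz; rw [if_neg]; omega
      rw [if_pos rfl, hT]
      have h1 := hBbound i i
      have h2 := hdiag i
      have habs : |B i i| ≤ α * (r i * r i) := by
        calc |B i i| ≤ specNorm (Matrix.of fun s t : Fin (n * p) => E (i, s) (i, t)) * r i * r i := h1
          _ ≤ α * (r i * r i) := by
              rw [mul_assoc]
              exact mul_le_mul_of_nonneg_right h2 (hrr0 i i)
      have := neg_abs_le (B i i)
      linarith
    · have hvne : (i : ℕ) ≠ (j : ℕ) := fun h => hne (Fin.ext h)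
      by_cases h1 : (j : ℕ) = (i : ℕ) + 1
      · have hT : triToeplitz (m - 2) i j = 1 := by
          unfold triToeplitz; rw [if_pos (Or.inr h1)]
        rw [if_neg hne, hT]
        have hb := hBbound i j
        have hs := hoff i j h1
        have habs : |B i j| ≤ β * (r i * r j) := by
          calc |B i j| ≤ specNorm (Matrix.of fun s t : Fin (n * p) => E (i, s) (j, t)) * r i * r j :=
                hb
            _ ≤ β * (r i * r j) := by
                rw [mul_assoc]
                exact mul_le_mul_of_nonneg_right hs (hrr0 i j)
        have := neg_abs_le (B i j)
        linarith
      · by_cases h2 : (i : ℕ) = (j : ℕ) + 1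
        · have hT : triToeplitz (m - 2) i j = 1 := by
            unfold triToeplitz; rw [if_pos (Or.inl h2)]
          rw [if_neg hne, hT]
          have hb := hBbound j i
          have hs := hoff j i h2
          have habs : |B i j| ≤ β * (r i * r j) := by
            rw [hBsym i j]
            calc |B j i| ≤ specNorm (Matrix.of fun s t : Fin (n * p) => E (j, s) (i, t)) * r j * r i :=
                  hb
              _ ≤ β * (r j * r i) := by
                  rw [mul_assoc]
                  exact mul_le_mul_of_nonneg_right hs (hrr0 j i)
              _ = β * (r i * r j) := by ring
          have := neg_abs_le (B i j)
          linarith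
        · have hz := htri i j (by omega)
          have hB0 : B i j = 0 := by
            rw [hBdef]
            simp only
            apply Finset.sum_eq_zero; intro s _
            apply Finset.sum_eq_zero; intro t _
            have hE0 : E (i, s) (j, t) = 0 := by
              have := congrFun (congrFun hz s) t
              simpa using this
            rw [hE0]; ring
          have hT : triToeplitz (m - 2) i j = 0 := by
            unfold triToeplitz; rw [if_neg]; omega
          rw [hB0, if_neg hne, hT]
          simp
  have hsum1 : ∑ i, ∑ j, (if i = j then α else 0) * (r i * r j) = α * ∑ i, S i := by
    rw [Finset.mul_sum]
    apply Finset.sum_congr rfl; intro i _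
    rw [show (∑ j, (if i = j then α else 0) * (r i * r j))
        = ∑ j, (if i = j then α * (r i * r j) else 0) by
      apply Finset.sum_congr rfl; intro j _; split <;> simp]
    rw [Finset.sum_ite_eq]
    simp [hr2 i]
  have hsum2 : ∑ i, ∑ j, β * (triToeplitz (m - 2) i j * (r i * r j)) ≤ 2 * β * ∑ i, S i := by
    have h := toeplitz_quad r
    simp only [hrsq] at h
    have hSsum : 0 ≤ ∑ i, S i := Finset.sum_nonneg (fun i _ => hS0 i)
    calc ∑ i, ∑ j, β * (triToeplitz (m - 2) i j * (r i * r j))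
        = β * ∑ i, ∑ j, triToeplitz (m - 2) i j * (r i * r j) := by
          rw [Finset.mul_sum]
          apply Finset.sum_congr rfl; intro i _
          rw [Finset.mul_sum]
      _ ≤ β * (2 * c * ∑ i, S i) := mul_le_mul_of_nonneg_left h hβ0
      _ ≤ 2 * β * ∑ i, S i := by
          nlinarith [mul_nonneg (mul_nonneg hβ0 (sub_nonneg.2 hc1)) hSsum]
  have hSsum : 0 ≤ ∑ i, S i := Finset.sum_nonneg (fun i _ => hS0 i)
  have hQElow : -(α * ∑ i, S i + 2 * β * ∑ i, S i) ≤ v ⬝ᵥ E.mulVec v := by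
    rw [hQE]
    have hstep : -(∑ i, ∑ j, ((if i = j then α else 0) * (r i * r j)
        + β * (triToeplitz (m - 2) i j * (r i * r j)))) ≤ ∑ i, ∑ j, B i j := by
      calc -(∑ i, ∑ j, ((if i = j then α else 0) * (r i * r j)
            + β * (triToeplitz (m - 2) i j * (r i * r j))))
          = ∑ i, ∑ j, -((if i = j then α else 0) * (r i * r j)
            + β * (triToeplitz (m - 2) i j * (r i * r j))) := by
            simp only [← Finset.sum_neg_distrib]
        _ ≤ ∑ i, ∑ j, B i j :=
            Finset.sum_le_sum (fun i _ => Finset.sum_le_sum (fun j _ => key i j))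
    have hsplit : ∑ i, ∑ j, ((if i = j then α else 0) * (r i * r j)
        + β * (triToeplitz (m - 2) i j * (r i * r j)))
        ≤ α * ∑ i, S i + 2 * β * ∑ i, S i := by
      simp only [Finset.sum_add_distrib]
      rw [hsum1]
      linarith [hsum2]
    linarith
  -- identify v ⬝ᵥ v
  have hvv : v ⬝ᵥ v = ∑ i, S i := by
    simp only [dotProduct, Fintype.sum_prod_type, hSdef]
    apply Finset.sum_congr rfl; intro i _
    apply Finset.sum_congr rfl; intro s _
    ring
  have hvv' : v ⬝ᵥ v = ∑ s, W s := by
    rw [hvv]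
    rw [Finset.sum_comm]
  -- assembly
  rw [Matrix.add_mulVec, Matrix.add_mulVec, Matrix.smul_mulVec,
    dotProduct_add, dotProduct_add, dotProduct_smul,
    hgoalcos, hQ1, hQ2, smul_eq_mul]
  have hpert : α + 2 * β ≤ 43 * δ + 90 * δ ^ 2 := by
    rw [hαdef, hβdef]
    nlinarith [sq_nonneg δ, pow_le_pow_of_le_one hδ0' hδ1 (by norm_num : 2 ≤ 3),
      pow_le_pow_of_le_one hδ0' hδ1 (by norm_num : 2 ≤ 4)]
  have hfinal : (2 - 2 * c - 43 * δ - 90 * δ ^ 2) * (v ⬝ᵥ v)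
      ≤ (2 - 2 * c) * (v ⬝ᵥ v) - (α + 2 * β) * (v ⬝ᵥ v) := by
    rw [hvv]
    nlinarith [mul_nonneg (by linarith : (0:ℝ) ≤ 43 * δ + 90 * δ ^ 2 - (α + 2 * β)) hSsum]
  have hQA' : (2 - 2 * c) * (v ⬝ᵥ v)
      ≤ 2 * ∑ s, dfun s * W s + ∑ s, lfun s * Ts s := by
    rw [hvv']
    exact hQA
  have hE' : -((α + 2 * β) * (v ⬝ᵥ v)) ≤ v ⬝ᵥ E.mulVec v := by
    rw [hvv]
    calc -((α + 2 * β) * ∑ i, S i) = -(α * ∑ i, S i + 2 * β * ∑ i, S i) := by ring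
      _ ≤ v ⬝ᵥ E.mulVec v := hQElow
  linarith
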